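/- The unit object of any monoidal structure on the category Graph of reflexive graphs is isomorphic either to the empty graph ∅ or to the one-vertex graph I_0. -/

import Mathlib

open CategoryTheory MonoidalCategory

/-- The category of (reflexive) graphs: an object is a set of vertices with an
irreflexive symmetric adjacency relation. -/
structure GraphCat : Type 1 where
  V : Type
  adj : V → V → Prop
  symm : ∀ {v w : V}, adj v w → adj w v
  loopless : ∀ v : V, ¬ adj v v

namespace GraphCat

/-- A graph map: whenever `v ∼ w`, either `f v = f w` or `f v ∼ f w`. -/
structure Hom (X Y : GraphCat) where
  toFun : X.V → Y.V
  map_adj : ∀ {v w : X.V}, X.adj v w → toFun v = toFun w ∨ Y.adj (toFun v) (toFun w)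

theorem Hom.ext' {X Y : GraphCat} {f g : Hom X Y} (h : f.toFun = g.toFun) : f = g := by
  cases f; cases g; cases h; rfl

instance : Category GraphCat where
  Hom := Hom
  id X := ⟨fun v => v, fun h => Or.inr h⟩
  comp f g := ⟨fun v => g.toFun (f.toFun v), fun {v w} h => by
    rcases f.map_adj h with h' | h'
    · exact Or.inl (congrArg g.toFun h')
    · exact g.map_adj h'⟩
  id_comp f := Hom.ext' rfl
  comp_id f := Hom.ext' rfl
  assoc f g h := Hom.ext' rfl

/-- The one-vertex graph `I₀`. -/
def I0 : GraphCat := ⟨PUnit, fun _ _ => False, fun h => h, fun _ h => h⟩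

/-- The graph `I₁` with two vertices `s = false` and `t = true` joined by an edge. -/
def I1 : GraphCat := ⟨Bool, fun v w => v ≠ w, Ne.symm, fun _ h => h rfl⟩

/-- The empty graph. -/
def emptyGraph : GraphCat := ⟨Empty, fun _ _ => False, fun h => h, fun _ h => h⟩

end GraphCat

open GraphCat

/-- The unit of any monoidal structure on the category of (reflexive) graphs is
isomorphic either to the empty graph or to the one-vertex graph `I₀`. -/
theorem monoidal_unit_graph [MonoidalCategory GraphCat] :
    Nonempty ((𝟙_ GraphCat) ≅ emptyGraph) ∨ Nonempty ((𝟙_ GraphCat) ≅ I0) := by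
  classical
  -- any two vertices of the unit are equal
  have key : ∀ a b : (𝟙_ GraphCat).V, a = b := by
    intro a b
    let c : (𝟙_ GraphCat).V → ((𝟙_ GraphCat) ⟶ (𝟙_ GraphCat)) :=
      fun x => ⟨fun _ => x, fun _ => Or.inl rfl⟩
    have hab : c a ≫ c b = c b := Hom.ext' rfl
    have hba : c b ≫ c a = c a := Hom.ext' rfl
    have h1 : (c a ⊗ₘ c b) ≫ (λ_ (𝟙_ GraphCat)).hom
        = (ρ_ (𝟙_ GraphCat)).hom ≫ (c a ≫ c b) := by
      rw [MonoidalCategory.tensorHom_def, Category.assoc,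
        MonoidalCategory.leftUnitor_naturality, unitors_equal,
        ← Category.assoc, MonoidalCategory.rightUnitor_naturality,
        Category.assoc]
    have h2 : (c a ⊗ₘ c b) ≫ (ρ_ (𝟙_ GraphCat)).hom
        = (λ_ (𝟙_ GraphCat)).hom ≫ (c b ≫ c a) := by
      rw [MonoidalCategory.tensorHom_def', Category.assoc,
        MonoidalCategory.rightUnitor_naturality, ← unitors_equal,
        ← Category.assoc, MonoidalCategory.leftUnitor_naturality,
        Category.assoc]
    rw [hab] at h1
    rw [hba] at h2
    rw [unitors_equal] at h1
    have h3 : (ρ_ (𝟙_ GraphCat)).hom ≫ c b = (ρ_ (𝟙_ GraphCat)).hom ≫ c a := by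
      rw [← h1, h2, unitors_equal]
    rw [cancel_epi] at h3
    have := congrArg (fun f => Hom.toFun f a) h3
    exact this.symm
  by_cases h : Nonempty (𝟙_ GraphCat).V
  · right
    obtain ⟨a⟩ := h
    exact ⟨⟨⟨fun _ => PUnit.unit, fun _ => Or.inl rfl⟩,
            ⟨fun _ => a, fun _ => Or.inl rfl⟩,
            Hom.ext' (funext fun v => key a v),
            Hom.ext' rfl⟩⟩
  · left
    exact ⟨⟨⟨fun v => (h ⟨v⟩).elim, fun {v w} _ => (h ⟨v⟩).elim⟩,
            ⟨fun e => e.elim, fun {v} _ => v.elim⟩,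
            Hom.ext' (funext fun v => (h ⟨v⟩).elim),
            Hom.ext' (funext fun e => e.elim)⟩⟩
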